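/- Let K be a symmetric positive semidefinite n×n real matrix and σ > 0. Then the function S ↦ (1/2)·log det(I_{|S|} + σ^{-2}·K[S]) defined on subsets S of {1,...,n}, where K[S] is the principal submatrix indexed by S, is monotone: S ⊆ S' implies the value at S is at most the value at S'. -/

import Mathlib

open Matrix

/-- A nonneg scalar multiple of a PSD matrix is PSD. -/
lemma psd_smul {m : Type*} [Fintype m] {M : Matrix m m ℝ} (hM : M.PosSemidef)
    {c : ℝ} (hc : 0 ≤ c) : (c • M).PosSemidef := by
  refine ⟨?_, fun x => ?_⟩
  · unfold Matrix.IsHermitian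
    rw [conjTranspose_smul, hM.1.eq]
    simp
  · have h := mul_nonneg hc (hM.2 x)
    simp only [Finsupp.mul_sum] at h
    simp only [Matrix.smul_apply, smul_eq_mul]
    refine le_of_le_of_eq h (Finsupp.sum_congr fun i _ => Finsupp.sum_congr fun j _ => ?_)
    ring

/-- For PSD real B, `1 ≤ det (1 + B)`. -/
lemma one_le_det_one_add {m : Type*} [Fintype m] [DecidableEq m]
    {B : Matrix m m ℝ} (hB : B.PosSemidef) : 1 ≤ (1 + B).det := by
  have hH := hB.1
  have hspec := hH.spectral_theorem
  set U : Matrix m m ℝ := (hH.eigenvectorUnitary : Matrix m m ℝ) with hU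
  have hUU : U * star U = 1 := (Matrix.mem_unitaryGroup_iff).mp hH.eigenvectorUnitary.2
  have h1 : (1 : Matrix m m ℝ) + B
      = U * (1 + diagonal (RCLike.ofReal ∘ hH.eigenvalues)) * star U := by
    rw [mul_add, add_mul, mul_one, hUU]; exact congrArg (1 + ·) hspec
  rw [h1, Matrix.det_mul_right_comm, hUU, one_mul]
  have : (1 : Matrix m m ℝ) + diagonal (RCLike.ofReal ∘ hH.eigenvalues)
      = diagonal (fun i => 1 + hH.eigenvalues i) := by
    rw [← diagonal_one, diagonal_add]
    congr 1
  rw [this, det_diagonal]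
  calc (1:ℝ) = ∏ _i : m, 1 := by simp
    _ ≤ ∏ i, (1 + hH.eigenvalues i) := by
        apply Finset.prod_le_prod
        · intro i _; norm_num
        · intro i _
          have := hB.eigenvalues_nonneg i
          linarith

/-- Block monotonicity: for PSD A on a sum type, det(1 + A₁₁) ≤ det(1 + A). -/
lemma det_one_add_toBlocks_le {m o : Type*} [Fintype m] [DecidableEq m]
    [Fintype o] [DecidableEq o] {A : Matrix (m ⊕ o) (m ⊕ o) ℝ} (hA : A.PosSemidef) :
    (1 + A.toBlocks₁₁).det ≤ (1 + A).det := by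
  set A11 := A.toBlocks₁₁
  set A12 := A.toBlocks₁₂
  set A21 := A.toBlocks₂₁
  set A22 := A.toBlocks₂₂
  have h21 : A21 = A12.conjTranspose := by
    ext i j
    simpa [A21, A12, toBlocks₂₁, toBlocks₁₂] using
      (congrFun (congrFun hA.1.eq (Sum.inr i)) (Sum.inl j)).symm
  have hPD11 : (1 + A11).PosDef := by
    apply Matrix.PosDef.add_posSemidef Matrix.PosDef.one
    exact hA.submatrix Sum.inl
  have hinv : Invertible (1 + A11) := hPD11.isUnit.invertible
  have hblocks : (1 : Matrix (m ⊕ o) (m ⊕ o) ℝ) + A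
      = fromBlocks (1 + A11) A12 A21 (1 + A22) := by
    rw [← fromBlocks_toBlocks A, ← fromBlocks_one, fromBlocks_add]
    simp [A11, A12, A21, A22]
  -- the matrix with `1` added only to the top-left block is PSD
  have hpsd' : (fromBlocks (1 + A11) A12 A12.conjTranspose A22).PosSemidef := by
    have h2 : fromBlocks (1 + A11) A12 A12.conjTranspose A22
        = fromBlocks (1 : Matrix m m ℝ) 0 0 0 + A := by
      rw [← fromBlocks_toBlocks A, fromBlocks_add, ← h21]
      simp [A11, A12, A21, A22]
    rw [h2]
    refine Matrix.PosSemidef.add ?_ hA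
    have : (fromBlocks (1 : Matrix m m ℝ) 0 0 (0 : Matrix o o ℝ))
        = diagonal (Sum.elim (fun _ => (1:ℝ)) (fun _ => 0)) := by
      ext (i|i) (j|j) <;> simp [diagonal, fromBlocks, Matrix.one_apply]
    rw [this]
    apply Matrix.posSemidef_diagonal_iff.mpr
    rintro (i|i) <;> norm_num
  have hschur : (A22 - A12.conjTranspose * (1 + A11)⁻¹ * A12).PosSemidef :=
    (Matrix.PosDef.fromBlocks₁₁ _ _ hPD11).mp hpsd'
  rw [hblocks, Matrix.det_fromBlocks₁₁, invOf_eq_nonsing_inv]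
  have key : (1 : Matrix o o ℝ) + A22 - A21 * (1 + A11)⁻¹ * A12
      = 1 + (A22 - A12.conjTranspose * (1 + A11)⁻¹ * A12) := by
    rw [h21]; abel
  rw [key]
  have h := mul_le_mul_of_nonneg_left (one_le_det_one_add hschur) hPD11.det_pos.le
  simpa using h

theorem stmt_13 (n : ℕ) (K : Matrix (Fin n) (Fin n) ℝ) (hK : K.PosSemidef)
    (σ : ℝ) (hσ : 0 < σ) (S S' : Finset (Fin n)) (hSS : S ⊆ S') :
    (1/2) * Real.log (1 + σ⁻¹^2 • K.submatrix (Subtype.val : {i // i ∈ S} → Fin n) Subtype.val).det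
      ≤ (1/2) * Real.log (1 + σ⁻¹^2 • K.submatrix (Subtype.val : {i // i ∈ S'} → Fin n) Subtype.val).det := by
  have hc : (0:ℝ) ≤ σ⁻¹^2 := sq_nonneg _
  -- equivalence S' ≃ S ⊕ (S' \ S)
  let e : {i // i ∈ S'} ≃ ({i // i ∈ S} ⊕ {i // i ∈ S' \ S}) :=
    { toFun := fun x => if h : x.1 ∈ S then Sum.inl ⟨x.1, h⟩ else
        Sum.inr ⟨x.1, Finset.mem_sdiff.mpr ⟨x.2, h⟩⟩
      invFun := Sum.elim (fun x => ⟨x.1, hSS x.2⟩) (fun x => ⟨x.1, (Finset.mem_sdiff.mp x.2).1⟩)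
      left_inv := fun x => by by_cases h : x.1 ∈ S <;> simp [h]
      right_inv := fun x => by
        rcases x with x | x
        · simp [x.2]
        · have := Finset.mem_sdiff.mp x.2
          simp [this.2] }
  set g : ({i // i ∈ S} ⊕ {i // i ∈ S' \ S}) → Fin n :=
    Sum.elim Subtype.val Subtype.val with hg
  set A : Matrix ({i // i ∈ S} ⊕ {i // i ∈ S' \ S}) ({i // i ∈ S} ⊕ {i // i ∈ S' \ S}) ℝ :=
    σ⁻¹^2 • K.submatrix g g with hA
  have hApsd : A.PosSemidef := psd_smul (hK.submatrix g) hc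
  have hB1 : A.toBlocks₁₁ = σ⁻¹^2 • K.submatrix (Subtype.val : {i // i ∈ S} → Fin n) Subtype.val := by
    ext i j
    simp [hA, toBlocks₁₁, hg]
  have hA' : ((1 : Matrix {i // i ∈ S'} {i // i ∈ S'} ℝ)
        + σ⁻¹^2 • K.submatrix (Subtype.val : {i // i ∈ S'} → Fin n) Subtype.val).det
      = (1 + A).det := by
    rw [← Matrix.det_submatrix_equiv_self e.symm]
    congr 1
    ext x y
    have hx : ((e.symm x : {i // i ∈ S'}) : Fin n) = g x := by
      rcases x with x | x <;> simp [e, hg]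
    have hy : ((e.symm y : {i // i ∈ S'}) : Fin n) = g y := by
      rcases y with y | y <;> simp [e, hg]
    simp [hA, Matrix.one_apply, hx, hy, Equiv.apply_eq_iff_eq]
  have hmono : ((1 : Matrix {i // i ∈ S} {i // i ∈ S} ℝ)
        + σ⁻¹^2 • K.submatrix (Subtype.val : {i // i ∈ S} → Fin n) Subtype.val).det
      ≤ ((1 : Matrix {i // i ∈ S'} {i // i ∈ S'} ℝ)
        + σ⁻¹^2 • K.submatrix (Subtype.val : {i // i ∈ S'} → Fin n) Subtype.val).det := by
    rw [hA', ← hB1]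
    exact det_one_add_toBlocks_le hApsd
  have hpos : (0:ℝ) < ((1 : Matrix {i // i ∈ S} {i // i ∈ S} ℝ)
        + σ⁻¹^2 • K.submatrix (Subtype.val : {i // i ∈ S} → Fin n) Subtype.val).det :=
    lt_of_lt_of_le one_pos (one_le_det_one_add (psd_smul (hK.submatrix _) hc))
  have := Real.log_le_log hpos hmono
  linarith
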